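/- Let A ∈ M_2(ℂ) be invertible. Then F_N(A) is symmetric with respect to reflection across the line in ℂ through the points ±√(det A). In particular, if det A > 0 then z ∈ F_N(A) implies z̄ ∈ F_N(A). -/

import Mathlib

open Matrix

noncomputable def fN {n : ℕ} (A : Matrix (Fin n) (Fin n) ℂ)
    (x : EuclideanSpace ℂ (Fin n)) : ℂ :=
  (inner ℂ x (Matrix.toEuclideanLin A x) : ℂ) /
    ((‖x‖ * ‖Matrix.toEuclideanLin A x‖ : ℝ) : ℂ)

noncomputable def FN {n : ℕ} (A : Matrix (Fin n) (Fin n) ℂ) : Set ℂ :=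
  {z | ∃ x : EuclideanSpace ℂ (Fin n), Matrix.toEuclideanLin A x ≠ 0 ∧ z = fN A x}

/-- coordinates of `toEuclideanLin` -/
private lemma L_coord (M : Matrix (Fin 2) (Fin 2) ℂ) (v : EuclideanSpace ℂ (Fin 2)) (i : Fin 2) :
    Matrix.toEuclideanLin M v i = M i 0 * v 0 + M i 1 * v 1 := by
  fin_cases i <;> simp [Matrix.toEuclideanLin_apply, Matrix.mulVec, dotProduct, Fin.sum_univ_two]

private lemma inner_coord (v w : EuclideanSpace ℂ (Fin 2)) :
    (inner ℂ v w : ℂ) = (starRingEnd ℂ) (v 0) * w 0 + (starRingEnd ℂ) (v 1) * w 1 := by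
  simp [PiLp.inner_apply, Fin.sum_univ_two, RCLike.inner_apply, mul_comm]

private lemma L_comp (M N : Matrix (Fin 2) (Fin 2) ℂ) (v : EuclideanSpace ℂ (Fin 2)) :
    Matrix.toEuclideanLin M (Matrix.toEuclideanLin N v) = Matrix.toEuclideanLin (M * N) v := by
  simp [Matrix.toEuclideanLin_apply, Matrix.mulVec_mulVec]

/-- a unit vector orthogonal to two given vectors in ℝ³ -/
private lemma exists_orth (u1 u2 u3 v1 v2 v3 : ℝ) :
    ∃ n1 n2 n3 : ℝ, n1^2 + n2^2 + n3^2 = 1 ∧ n1*u1 + n2*u2 + n3*u3 = 0 ∧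
      n1*v1 + n2*v2 + n3*v3 = 0 := by
  have H : ∃ m1 m2 m3 : ℝ, (m1^2 + m2^2 + m3^2 ≠ 0) ∧ m1*u1 + m2*u2 + m3*u3 = 0 ∧
      m1*v1 + m2*v2 + m3*v3 = 0 := by
    by_cases hc : u2*v3 - u3*v2 = 0 ∧ u3*v1 - u1*v3 = 0 ∧ u1*v2 - u2*v1 = 0
    · obtain ⟨hc1, hc2, hc3⟩ := hc
      by_cases hu : u1 = 0 ∧ u2 = 0
      · by_cases hu3 : u3 = 0
        · by_cases hv : v1 = 0 ∧ v2 = 0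
          · exact ⟨1, 0, 0, by norm_num, by rw [hu.1]; ring, by rw [hv.1]; ring⟩
          · refine ⟨-v2, v1, 0, ?_, by rw [hu.1, hu.2]; ring, by ring⟩
            intro h
            exact hv ⟨by nlinarith [sq_nonneg v1, sq_nonneg v2],
                      by nlinarith [sq_nonneg v1, sq_nonneg v2]⟩
        · have hv1 : v1 = 0 := by
            have h' : u3 * v1 = 0 := by rw [hu.1] at hc2; linarith
            exact (mul_eq_zero.mp h').resolve_left hu3
          exact ⟨1, 0, 0, by norm_num, by rw [hu.1]; ring, by rw [hv1]; ring⟩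
      · refine ⟨-u2, u1, 0, ?_, by ring, by linarith [hc3]⟩
        intro h
        exact hu ⟨by nlinarith [sq_nonneg u1, sq_nonneg u2],
                  by nlinarith [sq_nonneg u1, sq_nonneg u2]⟩
    · refine ⟨u2*v3 - u3*v2, u3*v1 - u1*v3, u1*v2 - u2*v1, ?_, by ring, by ring⟩
      intro h
      exact hc ⟨by nlinarith [sq_nonneg (u2*v3 - u3*v2), sq_nonneg (u3*v1 - u1*v3),
                    sq_nonneg (u1*v2 - u2*v1)],
                by nlinarith [sq_nonneg (u2*v3 - u3*v2), sq_nonneg (u3*v1 - u1*v3),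
                    sq_nonneg (u1*v2 - u2*v1)],
                by nlinarith [sq_nonneg (u2*v3 - u3*v2), sq_nonneg (u3*v1 - u1*v3),
                    sq_nonneg (u1*v2 - u2*v1)]⟩
  obtain ⟨m1, m2, m3, hm, hmu, hmv⟩ := H
  have hmpos : 0 < m1^2 + m2^2 + m3^2 := lt_of_le_of_ne (by positivity) (Ne.symm hm)
  set s : ℝ := Real.sqrt (m1^2 + m2^2 + m3^2) with hs
  have hspos : 0 < s := Real.sqrt_pos.mpr hmpos
  have hs2 : s^2 = m1^2 + m2^2 + m3^2 := Real.sq_sqrt hmpos.le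
  have hsne : s ≠ 0 := ne_of_gt hspos
  refine ⟨m1/s, m2/s, m3/s, ?_, ?_, ?_⟩
  · have e : (m1/s)^2 + (m2/s)^2 + (m3/s)^2 = (m1^2 + m2^2 + m3^2)/s^2 := by ring
    rw [e, ← hs2, div_self (pow_ne_zero 2 hsne)]
  · have e : m1/s*u1 + m2/s*u2 + m3/s*u3 = (m1*u1 + m2*u2 + m3*u3)/s := by ring
    rw [e, hmu, zero_div]
  · have e : m1/s*v1 + m2/s*v2 + m3/s*v3 = (m1*v1 + m2*v2 + m3*v3)/s := by ring
    rw [e, hmv, zero_div]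

set_option maxHeartbeats 2000000 in
private lemma key (A : Matrix (Fin 2) (Fin 2) ℂ) (hA : IsUnit A) :
    ∀ z ∈ FN A, (A.det / ((‖A.det‖ : ℝ) : ℂ)) * (starRingEnd ℂ z) ∈ FN A := by
  have hdet : A.det ≠ 0 := isUnit_iff_ne_zero.mp ((Matrix.isUnit_iff_isUnit_det A).mp hA)
  rintro z ⟨x, hAx, rfl⟩
  set a : ℂ := A 0 0 with ha
  set b : ℂ := A 0 1 with hb
  set c : ℂ := A 1 0 with hc
  set d : ℂ := A 1 1 with hd
  obtain ⟨n1, n2, n3, hnn, hO1, hO2⟩ := exists_orth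
    (b.re + c.re) (c.im - b.im) (a.re - d.re)
    (b.im + c.im) (b.re - c.re) (a.im - d.im)
  set p : ℂ := (n3 : ℂ) with hp
  set q : ℂ := (n1 : ℂ) - Complex.I * (n2 : ℂ) with hq
  set q' : ℂ := (n1 : ℂ) + Complex.I * (n2 : ℂ) with hq'
  have hnnC : ((n1:ℂ))^2 + (n2:ℂ)^2 + (n3:ℂ)^2 = 1 := by exact_mod_cast hnn
  have h1 : p * p + q * q' = 1 := by
    rw [hp, hq, hq']
    linear_combination hnnC - (n2:ℂ)^2 * Complex.I_sq
  have h2 : q * c + q' * b + p * (a - d) = 0 := by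
    rw [hp, hq, hq']
    apply Complex.ext
    · simp [Complex.mul_re, Complex.add_re, Complex.sub_re, Complex.add_im, Complex.sub_im,
        Complex.mul_im, Complex.I_re, Complex.I_im, Complex.ofReal_re, Complex.ofReal_im]
      ring_nf
      ring_nf at hO1
      linarith [hO1]
    · simp [Complex.mul_re, Complex.add_re, Complex.sub_re, Complex.add_im, Complex.sub_im,
        Complex.mul_im, Complex.I_re, Complex.I_im, Complex.ofReal_re, Complex.ofReal_im]
      ring_nf
      ring_nf at hO2
      linarith [hO2]
  have hsp : (starRingEnd ℂ) p = p := by rw [hp]; exact Complex.conj_ofReal n3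
  have hsq : (starRingEnd ℂ) q = q' := by
    rw [hq, hq', map_sub, _root_.map_mul, Complex.conj_ofReal, Complex.conj_ofReal,
      Complex.conj_I]
    ring
  have hsq' : (starRingEnd ℂ) q' = q := by
    rw [hq, hq', map_add, _root_.map_mul, Complex.conj_ofReal, Complex.conj_ofReal,
      Complex.conj_I]
    ring
  set W : Matrix (Fin 2) (Fin 2) ℂ := !![p, q; q', -p] with hW
  -- key matrix identity : A * W * A = det A • W
  have hAeta : A = !![a, b; c, d] := by
    rw [ha, hb, hc, hd]; exact Matrix.etaExpand_eq A ▸ rfl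
  have hdet2 : A.det = a * d - b * c := by rw [Matrix.det_fin_two, ha, hb, hc, hd]
  have hAWA : A * W * A = A.det • W := by
    rw [hAeta, hW, Matrix.det_fin_two_of]
    ext i j
    fin_cases i <;> fin_cases j <;>
      simp [Matrix.mul_apply, Fin.sum_univ_two, Matrix.smul_apply] <;>
      [linear_combination a * h2; linear_combination b * h2;
       linear_combination c * h2; linear_combination d * h2]
  -- W preserves the inner product
  have unit_inner : ∀ v w : EuclideanSpace ℂ (Fin 2),
      (inner ℂ (Matrix.toEuclideanLin W v) (Matrix.toEuclideanLin W w) : ℂ) = inner ℂ v w := by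
    intro v w
    rw [inner_coord, inner_coord, L_coord, L_coord, L_coord, L_coord]
    have e00 : W 0 0 = p := by rw [hW]; rfl
    have e01 : W 0 1 = q := by rw [hW]; rfl
    have e10 : W 1 0 = q' := by rw [hW]; rfl
    have e11 : W 1 1 = -p := by rw [hW]; rfl
    rw [e00, e01, e10, e11]
    simp only [map_add, _root_.map_mul, map_neg, hsp, hsq, hsq']
    linear_combination ((starRingEnd ℂ) (v 0) * w 0 + (starRingEnd ℂ) (v 1) * w 1) * h1
  set u : EuclideanSpace ℂ (Fin 2) := Matrix.toEuclideanLin A x with hu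
  set y : EuclideanSpace ℂ (Fin 2) := Matrix.toEuclideanLin W u with hy
  have hx0 : x ≠ 0 := by
    intro h
    apply hAx
    rw [hu, h, map_zero]
  -- A y = det A • W x
  have hAy : Matrix.toEuclideanLin A y = A.det • Matrix.toEuclideanLin W x := by
    rw [hy, hu, L_comp, L_comp, hAWA]
    simp [_root_.map_smul]
  -- norms
  have norm_eq_of_inner : ∀ v w : EuclideanSpace ℂ (Fin 2),
      (inner ℂ v v : ℂ) = inner ℂ w w → ‖v‖ = ‖w‖ := by
    intro v w h
    have hv := inner_self_eq_norm_sq_to_K (𝕜 := ℂ) v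
    have hw := inner_self_eq_norm_sq_to_K (𝕜 := ℂ) w
    have h' := (hv.symm.trans h).trans hw
    have h'' : (‖v‖:ℝ)^2 = (‖w‖:ℝ)^2 := by exact_mod_cast h'
    nlinarith [norm_nonneg v, norm_nonneg w]
  have hny : ‖y‖ = ‖u‖ := norm_eq_of_inner _ _ (unit_inner u u)
  have hnWx : ‖Matrix.toEuclideanLin W x‖ = ‖x‖ := norm_eq_of_inner _ _ (unit_inner x x)
  have hnAy : ‖Matrix.toEuclideanLin A y‖ = ‖A.det‖ * ‖x‖ := by
    rw [hAy, norm_smul, hnWx]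
  have hAy0 : Matrix.toEuclideanLin A y ≠ 0 := by
    intro h
    rw [h, norm_zero] at hnAy
    have : ‖A.det‖ * ‖x‖ ≠ 0 :=
      mul_ne_zero (norm_ne_zero_iff.mpr hdet) (norm_ne_zero_iff.mpr hx0)
    exact this hnAy.symm
  -- numerator
  have hnum : (inner ℂ y (Matrix.toEuclideanLin A y) : ℂ)
      = A.det * (starRingEnd ℂ) (inner ℂ x u : ℂ) := by
    rw [hAy, inner_smul_right, hy, unit_inner u x, inner_conj_symm u x]
  refine ⟨y, hAy0, ?_⟩
  rw [fN, fN, hnum, hny, hnAy]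
  rw [map_div₀]
  rw [Complex.conj_ofReal]
  have c1 : ((‖A.det‖ : ℝ) : ℂ) ≠ 0 := by
    exact_mod_cast norm_ne_zero_iff.mpr hdet
  have c2 : ((‖x‖ : ℝ) : ℂ) ≠ 0 := by exact_mod_cast norm_ne_zero_iff.mpr hx0
  have c3 : ((‖u‖ : ℝ) : ℂ) ≠ 0 := by
    exact_mod_cast norm_ne_zero_iff.mpr (by rw [hu]; exact hAx)
  rw [div_mul_div_comm]
  congr 1
  push_cast
  ring

theorem stmt14 (A : Matrix (Fin 2) (Fin 2) ℂ) (hA : IsUnit A) :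
    (∀ z ∈ FN A, (A.det / ((‖A.det‖ : ℝ) : ℂ)) * (starRingEnd ℂ z) ∈ FN A) ∧
    (A.det.im = 0 → 0 < A.det.re → ∀ z ∈ FN A, (starRingEnd ℂ z) ∈ FN A) := by
  have hdet : A.det ≠ 0 := isUnit_iff_ne_zero.mp ((Matrix.isUnit_iff_isUnit_det A).mp hA)
  refine ⟨key A hA, ?_⟩
  intro him hre z hz
  have h := key A hA z hz
  have habs : ((‖A.det‖ : ℝ) : ℂ) = A.det := by
    have h1 : A.det = ((A.det.re : ℝ) : ℂ) := by
      apply Complex.ext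
      · simp
      · simp [him]
    rw [h1]
    rw [Complex.norm_real, Real.norm_eq_abs, abs_of_pos hre]
  rwa [habs, div_self hdet, one_mul] at h
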